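/- arXiv:1303.7248 — 4 statements merged into one kernel-verified Lean document; each statement's English description precedes it below -/
import Mathlib

section
/- Let G be a finite connected undirected graph and suppose each f_ij is continuous, odd, 2π-periodic, with f_ij(θ) > 0 for all θ ∈ (0,π). If φ* is an equilibrium of φ̇_i = Σ_{j∈N_i} f_ij(φ*_j − φ*_i) whose phases all lie in a closed half-circle (d(φ*, V(G)) ≤ π), then either all phases are equal (φ* = λ·1_N for some λ), or there exists a cut C of G such that φ*_j − φ*_i = π (mod 2π) for every edge ij ∈ C. -/
open Finset Real

/-- On a finite connected graph with continuous, odd, 2π-periodic coupling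
functions that are positive on `(0, π)`, any equilibrium whose phases all lie in a
closed half-circle (here: all representatives in `[c, c+π]`) is either in-phase, or
admits a cut all of whose crossing edges have phase difference `π (mod 2π)`. -/
theorem stmt5 {V : Type*} [Fintype V] [DecidableEq V]
    (G : SimpleGraph V) [DecidableRel G.Adj] (hG : G.Connected)
    (f : V → V → ℝ → ℝ)
    (hsym : ∀ i j, f i j = f j i)
    (hodd : ∀ i j θ, f i j (-θ) = -(f i j θ))
    (hper : ∀ i j θ, f i j (θ + 2 * π) = f i j θ)
    (hcont : ∀ i j, Continuous (f i j))
    (hpos : ∀ i j θ, 0 < θ → θ < π → 0 < f i j θ)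
    (φ : V → ℝ) (c : ℝ)
    (hhalf : ∀ i, φ i ∈ Set.Icc c (c + π))  -- d(φ*, V(G)) ≤ π
    (heq : ∀ i, ∑ j ∈ G.neighborFinset i, f i j (φ j - φ i) = 0) :
    (∃ l : ℝ, ∀ i, φ i = l) ∨
    (∃ S : Finset V, S.Nonempty ∧ S ≠ univ ∧
      ∀ i ∈ S, ∀ j ∉ S, G.Adj i j → ∃ m : ℤ, φ j - φ i = π + 2 * π * m) := by
  by_cases hV : Nonempty V
  · have huniv : (univ : Finset V).Nonempty := univ_nonempty
    set M := univ.sup' huniv φ with hM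
    by_cases hall : ∀ i, φ i = M
    · exact Or.inl ⟨M, hall⟩
    · right
      have f0 : ∀ i j, f i j 0 = 0 := by
        intro i j
        have h := hodd i j 0
        simp only [neg_zero] at h
        linarith
      have fpi : ∀ i j, f i j (-π) = 0 := by
        intro i j
        have h1 := hper i j (-π)
        have h2 : (-π) + 2 * π = π := by ring
        rw [h2] at h1
        have h3 := hodd i j π
        linarith
      have fneg : ∀ i j d, -π < d → d < 0 → f i j d < 0 := by
        intro i j d h1 h2
        have h3 : f i j d = -(f i j (-d)) := by
          have := hodd i j (-d); simp at this; linarith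
        have := hpos i j (-d) (by linarith) (by linarith)
        linarith
      have fnonpos : ∀ i j d, -π ≤ d → d ≤ 0 → f i j d ≤ 0 := by
        intro i j d h1 h2
        rcases eq_or_lt_of_le h1 with h | h
        · rw [← h]; exact le_of_eq (fpi i j)
        rcases eq_or_lt_of_le h2 with h' | h'
        · rw [h']; exact le_of_eq (f0 i j)
        exact le_of_lt (fneg i j d h h')
      obtain ⟨i0, _, hi0⟩ := Finset.exists_mem_eq_sup' huniv φ
      refine ⟨univ.filter (fun i => φ i = M), ⟨i0, by simp [hi0.symm]; rfl⟩, ?_, ?_⟩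
      · push_neg at hall
        obtain ⟨k, hk⟩ := hall
        intro hSuniv
        have : k ∈ univ.filter (fun i => φ i = M) := by rw [hSuniv]; exact mem_univ k
        simp at this
        exact hk this
      · intro i hi j hj hadj
        simp only [mem_filter, mem_univ, true_and] at hi hj
        -- bounds on differences
        have hle : ∀ k, φ k ≤ M := fun k => Finset.le_sup' φ (mem_univ k)
        have hMub : M ≤ c + π := hi ▸ (hhalf i).2
        have hbd : ∀ k, -π ≤ φ k - φ i ∧ φ k - φ i ≤ 0 := by
          intro k
          constructor
          · have := (hhalf k).1; rw [hi]; linarith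
          · rw [hi]; linarith [hle k]
        have hzero : ∀ k ∈ G.neighborFinset i, f i k (φ k - φ i) = 0 := by
          have := (Finset.sum_eq_zero_iff_of_nonpos (fun k _ =>
            fnonpos i k (φ k - φ i) (hbd k).1 (hbd k).2)).mp (heq i)
          exact this
        have hjmem : j ∈ G.neighborFinset i := by
          rw [SimpleGraph.mem_neighborFinset]; exact hadj
        have hfj := hzero j hjmem
        have hjlt : φ j - φ i < 0 := by
          have := lt_of_le_of_ne (hle j) hj
          rw [hi]; linarith
        have hd : φ j - φ i = -π := by
          by_contra hne
          have h1 : -π < φ j - φ i := lt_of_le_of_ne (hbd j).1 (Ne.symm hne)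
          exact absurd hfj (ne_of_lt (fneg i j _ h1 hjlt))
        exact ⟨-1, by push_cast; linarith⟩
  · exact absurd hG.nonempty hV
end

section
/- Fix b ∈ (0, π) and let each f_ij belong to the family F_b: odd, 2π-periodic, C¹, with f'_ij(θ) > 0 for θ ∈ (−b, b) and f'_ij(θ) < 0 for θ ∈ (b, 2π−b). Let G be a connected graph on N vertices and let φ* be a non-in-phase equilibrium of φ̇_i = Σ_{j∈N_i} f_ij(φ_j − φ_i). If b ≤ π/(N−1), then there exists a cut C of G such that f'_ij(φ*_j − φ*_i) < 0 for every edge ij ∈ C (hence φ* is unstable). -/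
open Finset Real

lemma walk_closure {V : Type*} {G : SimpleGraph V} (T : Set V)
    (hcl : ∀ i ∈ T, ∀ j, G.Adj i j → j ∈ T) :
    ∀ {u v : V}, G.Walk u v → u ∈ T → v ∈ T := by
  intro u v w
  induction w with
  | nil => exact id
  | cons h _ ih => exact fun hu => ih (hcl _ hu _ h)

lemma aux_val_shift (g : ℝ → ℝ) (hper : ∀ θ, g (θ + 2*π) = g θ) (θ : ℝ) (k : ℤ) :
    g (θ + 2*π*k) = g θ := by
  have hP2 : Function.Periodic g ((k:ℝ) * (2*π)) :=
    (show Function.Periodic g (2*π) from hper).int_mul k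
  have h := hP2 θ
  rw [show θ + 2*π*k = θ + (k:ℝ)*(2*π) by ring]
  exact h

lemma aux_deriv_shift (g : ℝ → ℝ) (hper : ∀ θ, g (θ + 2*π) = g θ) (θ : ℝ) (k : ℤ) :
    deriv g (θ + 2*π*k) = deriv g θ := by
  have hP2 : Function.Periodic g ((k:ℝ) * (2*π)) :=
    (show Function.Periodic g (2*π) from hper).int_mul k
  have hgg : g = fun x => g (x + (k:ℝ)*(2*π)) := by
    funext x; exact (hP2 x).symm
  have h1 : deriv (fun x => g (x + (k:ℝ)*(2*π))) θ = deriv g (θ + (k:ℝ)*(2*π)) :=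
    deriv_comp_add_const g ((k:ℝ)*(2*π)) θ
  calc deriv g (θ + 2*π*k) = deriv g (θ + (k:ℝ)*(2*π)) := by ring_nf
    _ = deriv (fun x => g (x + (k:ℝ)*(2*π))) θ := h1.symm
    _ = deriv g θ := by rw [← hgg]

lemma aux_pos (g : ℝ → ℝ) (b : ℝ) (hb0 : 0 < b) (hbπ : b < π)
    (hcont : Continuous g) (hg0 : g 0 = 0) (hgπ : g π = 0)
    (hpos : ∀ θ, -b < θ → θ < b → 0 < deriv g θ)
    (hneg : ∀ θ, b < θ → θ < 2*π - b → deriv g θ < 0) :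
    ∀ θ, 0 < θ → θ < π → 0 < g θ := by
  have hπ := Real.pi_pos
  have hmono : StrictMonoOn g (Set.Icc 0 b) :=
    strictMonoOn_of_deriv_pos (convex_Icc 0 b) hcont.continuousOn
      (by intro θ hθ; rw [interior_Icc] at hθ
          exact hpos θ (by linarith [hθ.1]) hθ.2)
  have hanti : StrictAntiOn g (Set.Icc b π) :=
    strictAntiOn_of_deriv_neg (convex_Icc b π) hcont.continuousOn
      (by intro θ hθ; rw [interior_Icc] at hθ
          exact hneg θ hθ.1 (by linarith [hθ.2]))
  intro θ h1 h2
  rcases le_or_gt θ b with h | h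
  · calc (0:ℝ) = g 0 := hg0.symm
      _ < g θ := hmono ⟨le_rfl, hb0.le⟩ ⟨h1.le, h⟩ h1
  · calc (0:ℝ) = g π := hgπ.symm
      _ < g θ := hanti ⟨h.le, h2.le⟩ ⟨hbπ.le, le_rfl⟩ h2

lemma gap_chain (b : ℝ) (hb : 0 ≤ b) :
    ∀ n : ℕ, ∀ X : Finset ℝ, (0:ℝ) ∈ X →
      (∀ t ∈ X, (∃ s ∈ X, t < s) → ∃ s ∈ X, t < s ∧ s ≤ t + b) →
      ∀ t ∈ X, (X.filter (fun y => y < t)).card ≤ n → t ≤ n * b := by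
  intro n
  induction n with
  | zero =>
    intro X h0 _ t ht hc
    simp only [Nat.le_zero, Finset.card_eq_zero] at hc
    by_contra hlt
    push_neg at hlt
    have h0t : (0:ℝ) < t := by simpa using hlt
    have : (0:ℝ) ∈ X.filter (fun y => y < t) := Finset.mem_filter.2 ⟨h0, h0t⟩
    rw [hc] at this
    exact absurd this (Finset.notMem_empty 0)
  | succ n ih =>
    intro X h0 H t ht hc
    rcases le_or_gt t 0 with h | h
    · have hnn : (0:ℝ) ≤ ((n:ℝ)+1) * b := by positivity
      push_cast
      linarith
    · set F := X.filter (fun y => y < t) with hFdef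
      have hF : (0:ℝ) ∈ F := Finset.mem_filter.2 ⟨h0, h⟩
      have hFne : F.Nonempty := ⟨0, hF⟩
      set t' := F.max' hFne with ht'
      have ht'F : t' ∈ F := F.max'_mem hFne
      have ht'X : t' ∈ X := (Finset.mem_filter.mp ht'F).1
      have ht't : t' < t := (Finset.mem_filter.mp ht'F).2
      obtain ⟨s, hsX, hs1, hs2⟩ := H t' ht'X ⟨t, ht, ht't⟩
      have hts : t ≤ s := by
        by_contra hst
        push_neg at hst
        exact absurd (F.le_max' s (Finset.mem_filter.2 ⟨hsX, hst⟩)) (not_le.2 hs1)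
      have hsub : X.filter (fun y => y < t') ⊆ F.erase t' := by
        intro y hy
        rcases Finset.mem_filter.mp hy with ⟨hyX, hyt⟩
        exact Finset.mem_erase.2 ⟨ne_of_lt hyt, Finset.mem_filter.2 ⟨hyX, hyt.trans ht't⟩⟩
      have hcard : (X.filter (fun y => y < t')).card ≤ n := by
        have h1 := Finset.card_le_card hsub
        rw [Finset.card_erase_of_mem ht'F] at h1
        have h2 : 1 ≤ F.card := Finset.card_pos.mpr hFne
        omega
      have hih := ih X h0 H t' ht'X hcard
      push_cast
      linarith

/-- Let each coupling function belong to the family `F_b` (odd, 2π-periodic,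
C¹, `f' > 0` on `(-b, b)` and `f' < 0` on `(b, 2π - b)`), with `b ∈ (0, π)` and
`b ≤ π/(N-1)`, on a connected graph with `N` vertices. Then every non-in-phase
equilibrium `φ*` admits a cut `C` with `f'_ij(φ*_j - φ*_i) < 0` on every crossing edge
(hence `φ*` is unstable). -/
theorem stmt6 {N : ℕ} (hN : 2 ≤ N)
    (G : SimpleGraph (Fin N)) [DecidableRel G.Adj] (hG : G.Connected)
    (b : ℝ) (hb0 : 0 < b) (hbπ : b < π)
    (f : Fin N → Fin N → ℝ → ℝ)
    (hsym : ∀ i j, f i j = f j i)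
    (hodd : ∀ i j θ, f i j (-θ) = -(f i j θ))
    (hper : ∀ i j θ, f i j (θ + 2 * π) = f i j θ)
    (hC1 : ∀ i j, ContDiff ℝ 1 (f i j))
    (hpos : ∀ i j θ, -b < θ → θ < b → 0 < deriv (f i j) θ)
    (hneg : ∀ i j θ, b < θ → θ < 2 * π - b → deriv (f i j) θ < 0)
    (hbN : b ≤ π / (N - 1))
    (φ : Fin N → ℝ)
    (heq : ∀ i, ∑ j ∈ G.neighborFinset i, f i j (φ j - φ i) = 0)
    (hnip : ¬ ∀ i j, ∃ m : ℤ, φ i - φ j = 2 * π * m) :  -- non-in-phase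
    ∃ S : Finset (Fin N), S.Nonempty ∧ S ≠ univ ∧
      ∀ i ∈ S, ∀ j ∉ S, G.Adj i j → deriv (f i j) (φ j - φ i) < 0 := by
  classical
  have hπ := Real.pi_pos
  have h2π : (0:ℝ) < 2*π := by linarith
  have hne : (univ : Finset (Fin N)).Nonempty := ⟨⟨0, by omega⟩, mem_univ _⟩
  set xc : Fin N → Fin N → ℝ := fun i j => toIcoMod h2π 0 (φ j - φ i) with hxcdef
  have hx0 : ∀ i j, 0 ≤ xc i j := fun i j => (toIcoMod_mem_Ico h2π 0 (φ j - φ i)).1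
  have hx2 : ∀ i j, xc i j < 2*π := fun i j => by
    have h := (toIcoMod_mem_Ico h2π 0 (φ j - φ i)).2
    simpa using h
  have hxkey : ∀ i j, ∃ k : ℤ, φ j - φ i = xc i j + 2*π*k := by
    intro i j
    refine ⟨toIcoDiv h2π 0 (φ j - φ i), ?_⟩
    have h := self_sub_toIcoMod h2π 0 (φ j - φ i)
    rw [zsmul_eq_mul] at h
    linear_combination h
  have hxself : ∀ i, xc i i = 0 := by
    intro i
    show toIcoMod h2π 0 (φ i - φ i) = 0
    rw [sub_self]
    exact (toIcoMod_eq_self h2π).2 ⟨le_rfl, by linarith⟩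
  obtain ⟨i0, -, hi0min⟩ := Finset.exists_min_image univ (fun i => univ.sup' hne (xc i)) hne
  obtain ⟨imax, -, hiM⟩ := Finset.exists_mem_eq_sup' hne (xc i0)
  set x : Fin N → ℝ := xc i0 with hxdef
  set M : ℝ := univ.sup' hne x with hMdef
  -- hiM : M = x imax
  have hxM : ∀ j, x j ≤ M := fun j => Finset.le_sup' x (mem_univ j)
  have hxi0 : x i0 = 0 := hxself i0
  have hx0' : ∀ j, 0 ≤ x j := hx0 i0
  have hx2' : ∀ j, x j < 2*π := hx2 i0
  have hM0 : 0 ≤ M := by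
    have := hxM i0
    linarith [hxi0 ▸ hxM i0]
  have hMlt : M < 2*π := by rw [hiM]; exact hx2' imax
  -- rewrite of terms through periodicity
  have fterm : ∀ i j, f i j (φ j - φ i) = f i j (x j - x i) := by
    intro i j
    obtain ⟨kj, hkj⟩ := hxkey i0 j
    obtain ⟨ki, hki⟩ := hxkey i0 i
    have hphi : φ j - φ i = (x j - x i) + 2*π*((kj - ki : ℤ):ℝ) := by
      push_cast
      linear_combination hkj - hki
    rw [hphi]
    exact aux_val_shift (f i j) (hper i j) _ _
  have hdneg : ∀ i j (θ : ℝ) (k : ℤ) (δ : ℝ), θ = δ + 2*π*k → b < δ → δ < 2*π - b →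
      deriv (f i j) θ < 0 := by
    intro i j θ k δ hθ h1 h2
    rw [hθ, aux_deriv_shift (f i j) (hper i j) δ k]
    exact hneg i j δ h1 h2
  -- basic values of f
  have hg0 : ∀ i j, f i j 0 = 0 := by
    intro i j
    have h := hodd i j 0
    rw [neg_zero] at h
    linarith
  have hgπ : ∀ i j, f i j π = 0 := by
    intro i j
    have h1 := hodd i j π
    have h2 := hper i j (-π)
    rw [show -π + 2*π = π by ring] at h2
    linarith
  have hgnegπ : ∀ i j, f i j (-π) = 0 := by
    intro i j
    rw [hodd i j π, hgπ i j, neg_zero]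
  have hgpos : ∀ i j (θ : ℝ), 0 < θ → θ < π → 0 < f i j θ :=
    fun i j => aux_pos (f i j) b hb0 hbπ (hC1 i j).continuous (hg0 i j) (hgπ i j)
      (hpos i j) (hneg i j)
  have hgneg : ∀ i j (θ : ℝ), -π < θ → θ < 0 → f i j θ < 0 := by
    intro i j θ h1 h2
    have h3 := hgpos i j (-θ) (by linarith) (by linarith)
    have h4 := hodd i j (-θ)
    rw [neg_neg] at h4
    linarith
  -- connectivity closure
  have hconn : ∀ (T : Set (Fin N)), (∀ i ∈ T, ∀ j, G.Adj i j → j ∈ T) →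
      ∀ i' ∈ T, ∀ v, v ∈ T := by
    intro T hcl i' hi' v
    obtain ⟨w⟩ := hG.preconnected i' v
    exact walk_closure T hcl w hi'
  by_cases hcase : M ≤ π
  · -- all phases in an arc of length ≤ π
    by_cases hMπ : M = π
    · -- spread exactly π : the two clusters give the cut
      have hTuniv : ∀ v, x v = 0 ∨ x v = π := by
        intro v
        refine hconn {i | x i = 0 ∨ x i = π} ?_ i0 (Or.inl hxi0) v
        intro i hi j hadj
        have hsum := heq i
        rcases hi with hi | hi
        · -- x i = 0 : all terms nonneg
          have hnn : ∀ j' ∈ G.neighborFinset i, 0 ≤ f i j' (φ j' - φ i) := by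
            intro j' _
            rw [fterm i j', hi, sub_zero]
            rcases eq_or_lt_of_le (hx0' j') with h | h
            · rw [← h, hg0]
            · rcases eq_or_lt_of_le (hxM j') with h' | h'
              · rw [h', hMπ, hgπ]
              · exact le_of_lt (hgpos i j' _ h (by rw [hMπ] at h'; exact h'))
          have hj := (Finset.sum_eq_zero_iff_of_nonneg hnn).mp hsum j
            (by rw [SimpleGraph.mem_neighborFinset]; exact hadj)
          rw [fterm i j, hi, sub_zero] at hj
          show x j = 0 ∨ x j = π
          by_contra hcon
          push_neg at hcon
          have h1 : 0 < x j := lt_of_le_of_ne (hx0' j) (Ne.symm hcon.1)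
          have h2 : x j < π := lt_of_le_of_ne (by rw [← hMπ]; exact hxM j) hcon.2
          exact absurd hj (ne_of_gt (hgpos i j _ h1 h2))
        · -- x i = π : all terms nonpos
          have hnp : ∀ j' ∈ G.neighborFinset i, f i j' (φ j' - φ i) ≤ 0 := by
            intro j' _
            rw [fterm i j', hi]
            rcases eq_or_lt_of_le (hx0' j') with h | h
            · rw [← h, zero_sub, hgnegπ]
            · rcases eq_or_lt_of_le (hxM j') with h' | h'
              · rw [h', hMπ, sub_self, hg0]
              · refine le_of_lt (hgneg i j' _ (by linarith) ?_)
                rw [hMπ] at h'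
                linarith
          have hj := (Finset.sum_eq_zero_iff_of_nonpos hnp).mp hsum j
            (by rw [SimpleGraph.mem_neighborFinset]; exact hadj)
          rw [fterm i j, hi] at hj
          show x j = 0 ∨ x j = π
          by_contra hcon
          push_neg at hcon
          have h1 : 0 < x j := lt_of_le_of_ne (hx0' j) (Ne.symm hcon.1)
          have h2 : x j < π := lt_of_le_of_ne (by rw [← hMπ]; exact hxM j) hcon.2
          exact absurd hj (ne_of_lt (hgneg i j _ (by linarith) (by linarith)))
      refine ⟨univ.filter (fun i => x i = π), ⟨imax, ?_⟩, ?_, ?_⟩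
      · exact mem_filter.2 ⟨mem_univ _, by rw [← hiM]; exact hMπ⟩
      · intro hSuniv
        have h1 : i0 ∈ univ.filter (fun i => x i = π) := by
          rw [hSuniv]; exact mem_univ i0
        have h2 := (mem_filter.mp h1).2
        rw [hxi0] at h2
        exact absurd h2.symm (ne_of_gt hπ)
      · intro i hiS j hjS hadj
        have hxiπ : x i = π := (mem_filter.mp hiS).2
        have hxj0 : x j = 0 := by
          rcases hTuniv j with h | h
          · exact h
          · exact absurd (Finset.mem_filter.mpr ⟨Finset.mem_univ j, h⟩) hjS
        obtain ⟨kj, hkj⟩ := hxkey i0 j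
        obtain ⟨ki, hki⟩ := hxkey i0 i
        have hφ : φ j - φ i = π + 2*π*((kj - ki - 1 : ℤ):ℝ) := by
          push_cast
          linear_combination hkj - hki + hxj0 - hxiπ
        exact hdneg i j _ (kj - ki - 1) π hφ hbπ (by linarith)
    · -- spread < π : contradiction with non-in-phase
      exfalso
      have hMlt' : M < π := lt_of_le_of_ne hcase hMπ
      have hTuniv : ∀ v, x v = M := by
        intro v
        refine hconn {i | x i = M} ?_ imax hiM.symm v
        intro i hi j hadj
        have hxiM : x i = M := hi
        have hsum := heq i
        have hnp : ∀ j' ∈ G.neighborFinset i, f i j' (φ j' - φ i) ≤ 0 := by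
          intro j' _
          rw [fterm i j', hxiM]
          rcases eq_or_lt_of_le (hxM j') with h | h
          · rw [h, sub_self, hg0]
          · refine le_of_lt (hgneg i j' _ ?_ (by linarith))
            have := hx0' j'
            linarith
        have hj := (Finset.sum_eq_zero_iff_of_nonpos hnp).mp hsum j
          (by rw [SimpleGraph.mem_neighborFinset]; exact hadj)
        rw [fterm i j, hxiM] at hj
        show x j = M
        rcases eq_or_lt_of_le (hxM j) with h | h
        · exact h
        · exfalso
          refine absurd hj (ne_of_lt (hgneg i j _ ?_ (by linarith)))
          have := hx0' j
          linarith
      have hM0' : M = 0 := by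
        have := hTuniv i0
        rw [hxi0] at this
        exact this.symm
      apply hnip
      intro i j
      obtain ⟨ki, hki⟩ := hxkey i0 i
      obtain ⟨kj, hkj⟩ := hxkey i0 j
      refine ⟨ki - kj, ?_⟩
      have hxi' : x i = 0 := by rw [hTuniv i, hM0']
      have hxj' : x j = 0 := by rw [hTuniv j, hM0']
      push_cast
      linear_combination hki - hkj + hxi' - hxj'
  · -- spread > π : there is a genuine gap, giving the cut
    push_neg at hcase
    set X : Finset ℝ := univ.image x with hXdef
    have h0X : (0:ℝ) ∈ X := mem_image.2 ⟨i0, mem_univ _, hxi0⟩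
    have hMX : M ∈ X := mem_image.2 ⟨imax, mem_univ _, hiM.symm⟩
    by_cases Hgap : ∀ t ∈ X, (∃ s ∈ X, t < s) → ∃ s ∈ X, t < s ∧ s ≤ t + b
    · exfalso
      have hcard : (X.filter (fun y => y < M)).card ≤ N - 1 := by
        have hsub : X.filter (fun y => y < M) ⊆ X.erase M := by
          intro y hy
          exact Finset.mem_erase.2 ⟨ne_of_lt (Finset.mem_filter.mp hy).2,
            (Finset.mem_filter.mp hy).1⟩
        have h1 := Finset.card_le_card hsub
        have h2 : X.card ≤ N := le_trans Finset.card_image_le (by simp)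
        have h3 := Finset.card_erase_of_mem hMX
        omega
      have hchain := gap_chain b hb0.le (N-1) X h0X Hgap M hMX hcard
      have hcast : ((N-1 : ℕ):ℝ) = (N:ℝ) - 1 := by
        have h1 : (1:ℕ) ≤ N := by omega
        push_cast [h1]
        ring
      have hN1 : (0:ℝ) < (N:ℝ) - 1 := by
        have : (2:ℝ) ≤ (N:ℝ) := by exact_mod_cast hN
        linarith
      have hb' : b * ((N:ℝ)-1) ≤ π := (le_div_iff₀ hN1).1 hbN
      rw [hcast] at hchain
      nlinarith
    · push_neg at Hgap
      obtain ⟨t, htX, hex, hno⟩ := Hgap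
      have ht0 : 0 ≤ t := by
        obtain ⟨k, -, hk⟩ := mem_image.mp htX
        exact hk ▸ hx0' k
      obtain ⟨s0, hs0X, hts0⟩ := hex
      obtain ⟨j0, -, hj0⟩ := mem_image.mp hs0X
      have hFne : (univ.filter (fun j => t < x j)).Nonempty :=
        ⟨j0, mem_filter.2 ⟨mem_univ _, by rw [hj0]; exact hts0⟩⟩
      obtain ⟨v, hvF, hvmin⟩ := Finset.exists_min_image _ x hFne
      have hvt : t < x v := (mem_filter.mp hvF).2
      have hvb : t + b < x v := hno (x v) (mem_image_of_mem x (mem_univ v)) hvt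
      have hMv : ∀ j, xc v j ≤ 2*π - (x v - t) := by
        intro j
        obtain ⟨kj, hkj⟩ := hxkey i0 j
        obtain ⟨kv, hkv⟩ := hxkey i0 v
        have hjv : φ j - φ v = (x j - x v) + (kj - kv) • (2*π) := by
          rw [zsmul_eq_mul]
          push_cast
          linear_combination hkj - hkv
        have hrw : xc v j = toIcoMod h2π 0 (x j - x v) := by
          show toIcoMod h2π 0 (φ j - φ v) = _
          rw [hjv, toIcoMod_add_zsmul]
        rcases le_or_gt (x v) (x j) with h | h
        · have hself : toIcoMod h2π 0 (x j - x v) = x j - x v :=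
            (toIcoMod_eq_self h2π).2 ⟨by linarith, by
              rw [zero_add]
              have := hx2' j
              have := hx0' v
              linarith⟩
          rw [hrw, hself]
          have := hx2' j
          linarith
        · have hjt : x j ≤ t := by
            by_contra hc
            push_neg at hc
            have := hvmin j (mem_filter.2 ⟨mem_univ _, hc⟩)
            linarith
          have hrw2 : toIcoMod h2π 0 (x j - x v) = x j - x v + 2*π := by
            have h1 : toIcoMod h2π 0 ((x j - x v + 2*π) + (-1 : ℤ) • (2*π)) =
                toIcoMod h2π 0 (x j - x v + 2*π) := toIcoMod_add_zsmul h2π 0 _ _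
            have h2 : toIcoMod h2π 0 (x j - x v + 2*π) = x j - x v + 2*π :=
              (toIcoMod_eq_self h2π).2 ⟨by
                have := hx0' j
                have := hx2' v
                linarith, by
                rw [zero_add]
                linarith⟩
            calc toIcoMod h2π 0 (x j - x v)
                = toIcoMod h2π 0 ((x j - x v + 2*π) + (-1:ℤ) • (2*π)) := by
                  congr 1
                  rw [zsmul_eq_mul]
                  push_cast
                  ring
              _ = x j - x v + 2*π := by rw [h1, h2]
          rw [hrw, hrw2]
          linarith
      have hMvle : univ.sup' hne (xc v) ≤ 2*π - (x v - t) :=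
        Finset.sup'_le _ _ (fun j _ => hMv j)
      have hM2 : M < 2*π - b := by
        have h1 := hi0min v (mem_univ v)
        have : M ≤ 2*π - (x v - t) := le_trans h1 hMvle
        linarith
      refine ⟨univ.filter (fun i => x i ≤ t), ⟨i0, mem_filter.2 ⟨mem_univ _, by
        rw [hxi0]; exact ht0⟩⟩, ?_, ?_⟩
      · intro hSuniv
        have h1 : imax ∈ univ.filter (fun i => x i ≤ t) := by
          rw [hSuniv]; exact mem_univ imax
        have h2 := (mem_filter.mp h1).2
        have h3 : x imax = M := hiM.symm
        have h4 := hxM v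
        linarith
      · intro i hiS j hjS hadj
        have hxi : x i ≤ t := (mem_filter.mp hiS).2
        have hxj : t < x j := by
          by_contra hc
          push_neg at hc
          exact hjS (mem_filter.2 ⟨mem_univ _, hc⟩)
        have hxjb : t + b < x j := hno (x j) (mem_image_of_mem x (mem_univ j)) hxj
        obtain ⟨kj, hkj⟩ := hxkey i0 j
        obtain ⟨ki, hki⟩ := hxkey i0 i
        have hφ : φ j - φ i = (x j - x i) + 2*π*((kj - ki : ℤ):ℝ) := by
          push_cast
          linear_combination hkj - hki
        refine hdneg i j _ (kj - ki) (x j - x i) hφ (by linarith) ?_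
        have h1 := hxM j
        have h2 := hx0' i
        linarith
end

section
/- Let f ∈ F_{π/2} (odd, 2π-periodic, C¹, f' > 0 on (−π/2, π/2), f' < 0 on (π/2, 3π/2)), with f even around π/2. Consider the all-to-all coupled system on a complete graph with an equilibrium φ* consisting of l_B constellations, each of m evenly spaced blocks with k_l oscillators per block of constellation l, and m even. Then for the partition P isolating one block V_0 of constellation C_0, Σ_{ij∈C(P)} f'(φ*_j − φ*_i) = −k_1 f'(0) < 0, hence φ* is unstable. -/
open Finset Real

/-- Let `f ∈ F_{π/2}` (odd, 2π-periodic, C¹, `f' > 0` on `(-π/2, π/2)`,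
`f' < 0` on `(π/2, 3π/2)`) be even around `π/2`. Consider an all-to-all coupled system
with an equilibrium `φ*` consisting of `L` constellations, each made of `m` evenly
spaced blocks (`m` even) with `k l` oscillators per block of constellation `l`
(constellation `l` is shifted by `δ l`). Then for the partition `P` isolating one
block `V₀` of constellation `C₀`, the cut cost is `-k₀ f'(0)` per oscillator of `V₀`,
so the total cut cost `∑_{ij ∈ C(P)} f'(φ*_j - φ*_i)` is negative; hence `φ*` is
unstable. -/
theorem stmt10 (L m : ℕ) (hL : 0 < L) (hm : 0 < m) (hme : Even m)
    (k : Fin L → ℕ) (hk : ∀ l, 0 < k l) (δ : Fin L → ℝ)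
    (hδ0 : δ ⟨0, hL⟩ = 0)
    (f : ℝ → ℝ)
    (hodd : ∀ θ, f (-θ) = -f θ)
    (hper : ∀ θ, f (θ + 2 * π) = f θ)
    (hC1 : ContDiff ℝ 1 f)
    (hpos : ∀ θ, -(π/2) < θ → θ < π/2 → 0 < deriv f θ)
    (hneg : ∀ θ, π/2 < θ → θ < 3*π/2 → deriv f θ < 0)
    (heven : ∀ θ, f (π - θ) = f θ)
    -- the oscillators: constellation l, block j, oscillator r within the block
    (φ : ((l : Fin L) × (Fin m × Fin (k l))) → ℝ)
    (hφ : ∀ x, φ x = 2 * π * (x.2.1 : ℕ) / m + δ x.1)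
    (V₀ : Finset ((l : Fin L) × (Fin m × Fin (k l))))
    (hV₀ : V₀ = univ.filter (fun x => x.1 = ⟨0, hL⟩ ∧ (x.2.1 : ℕ) = 0)) :
    (∀ i ∈ V₀, ∑ j ∈ univ.filter (fun j => j ∉ V₀), deriv f (φ j - φ i)
        = -((k ⟨0, hL⟩ : ℝ)) * deriv f 0) ∧
    ∑ i ∈ V₀, ∑ j ∈ univ.filter (fun j => j ∉ V₀), deriv f (φ j - φ i) < 0 := by
  -- f' is antiperiodic with period π
  have hanti : ∀ x : ℝ, deriv f (x + π) = - deriv f x := by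
    intro x
    have heq : (fun y => f (y + π)) = fun y => -f y := by
      funext y
      have h1 := heven (-y)
      rw [sub_neg_eq_add, hodd] at h1
      rw [add_comm]
      linarith
    have h2 : deriv (fun y => f (y + π)) x = deriv f (x + π) := deriv_comp_add_const f π x
    rw [heq, deriv.fun_neg] at h2
    linarith
  obtain ⟨n, hn⟩ := hme
  have hn0 : 0 < n := by omega
  have hnR : ((n : ℝ)) ≠ 0 := Nat.cast_ne_zero.mpr hn0.ne'
  -- the constellation sum of f' vanishes
  have hg : ∀ d : ℝ, ∑ j : Fin m, deriv f (2 * π * (j : ℕ) / m + d) = 0 := by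
    intro d
    rw [Fin.sum_univ_eq_sum_range (fun j => deriv f (2 * π * (j : ℕ) / m + d)), hn,
      Finset.sum_range_add]
    have hterm : ∀ x ∈ range n, deriv f (2 * π * ((n + x : ℕ) : ℝ) / ((n + n : ℕ) : ℝ) + d)
        = - deriv f (2 * π * ((x : ℕ) : ℝ) / ((n + n : ℕ) : ℝ) + d) := by
      intro x _
      have harg : 2 * π * ((n + x : ℕ) : ℝ) / ((n + n : ℕ) : ℝ) + d
          = (2 * π * ((x : ℕ) : ℝ) / ((n + n : ℕ) : ℝ) + d) + π := by
        push_cast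
        field_simp
        ring
      rw [harg, hanti]
    rw [Finset.sum_congr rfl hterm]
    simp
  -- the total sum of f'(φ j) vanishes
  have htotal : ∑ j : (Σ l : Fin L, Fin m × Fin (k l)), deriv f (φ j) = 0 := by
    rw [← Finset.univ_sigma_univ, Finset.sum_sigma]
    have hl : ∀ l : Fin L, ∑ p : Fin m × Fin (k l), deriv f (φ ⟨l, p⟩) = 0 := by
      intro l
      rw [Fintype.sum_prod_type]
      simp only [hφ, Finset.sum_const, card_univ, Fintype.card_fin, nsmul_eq_mul]
      rw [← Finset.mul_sum, hg (δ l), mul_zero]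
    simp [hl]
  -- phases vanish on V₀
  have hφV : ∀ i ∈ V₀, φ i = 0 := by
    intro i hi
    rw [hV₀, Finset.mem_filter] at hi
    rw [hφ, hi.2.2, hi.2.1, hδ0]
    simp
  -- cardinality of V₀
  haveI : NeZero m := ⟨hm.ne'⟩
  have hcard : V₀.card = k ⟨0, hL⟩ := by
    rw [hV₀, Finset.card_filter, ← Finset.univ_sigma_univ, Finset.sum_sigma]
    have step : ∀ l : Fin L,
        (∑ p : Fin m × Fin (k l), if l = ⟨0, hL⟩ ∧ ((p.1 : ℕ) = 0) then 1 else 0)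
          = if l = ⟨0, hL⟩ then k l else 0 := by
      intro l
      by_cases h : l = ⟨0, hL⟩
      · simp only [h, true_and, if_true]
        rw [Fintype.sum_prod_type]
        have hj : ∀ j : Fin m, ((j : ℕ) = 0) ↔ j = (⟨0, hm⟩ : Fin m) := by
          intro j; exact ⟨fun h => Fin.ext h, fun h => by rw [h]⟩
        simp [hj, Finset.sum_ite_eq', h]
      · simp [h]
    rw [Finset.sum_congr rfl (fun l _ => step l)]
    simp [Finset.sum_ite_eq']
  -- per-oscillator intra-block sum
  have hsumV : ∀ i ∈ V₀, ∑ j ∈ V₀, deriv f (φ j - φ i) = (k ⟨0, hL⟩ : ℝ) * deriv f 0 := by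
    intro i hi
    have hc : ∀ j ∈ V₀, deriv f (φ j - φ i) = deriv f 0 := by
      intro j hj
      rw [hφV j hj, hφV i hi, sub_zero]
    rw [Finset.sum_congr rfl hc, Finset.sum_const, hcard, nsmul_eq_mul]
  -- per-oscillator cut sum
  have hmain : ∀ i ∈ V₀, ∑ j ∈ univ.filter (fun j => j ∉ V₀), deriv f (φ j - φ i)
      = -((k ⟨0, hL⟩ : ℝ)) * deriv f 0 := by
    intro i hi
    have key := Finset.sum_filter_add_sum_filter_not univ (fun j => j ∈ V₀)
      (fun j => deriv f (φ j - φ i))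
    rw [Finset.filter_univ_mem] at key
    have huniv : ∑ j, deriv f (φ j - φ i) = 0 := by
      have hz : ∀ j, φ j - φ i = φ j := by
        intro j; rw [hφV i hi, sub_zero]
      simp only [hz]
      exact htotal
    have hv := hsumV i hi
    rw [huniv, hv] at key
    linarith
  refine ⟨hmain, ?_⟩
  rw [Finset.sum_congr rfl hmain, Finset.sum_const, hcard, nsmul_eq_mul]
  have hf0 : 0 < deriv f 0 := hpos 0 (by linarith [pi_pos]) (by linarith [pi_pos])
  have hk0 : (0 : ℝ) < (k ⟨0, hL⟩ : ℝ) := Nat.cast_pos.mpr (hk _)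
  nlinarith [mul_pos (mul_pos hk0 hk0) hf0]
end

section
/- Let f ∈ F_{π/2} be odd, even around π/2, strictly concave on [0,π], with f' strictly concave on [−π/2, π/2], and let m = 2k+1 ≥ 7 be odd. Then for every δ ∈ [0, 2π/m], 2g_m'(δ) − f'(δ + 2π/m) − 2f'(δ) − f'(δ − 2π/m) < f'(0) − 2f'(π/m) ≤ 0, where g_m'(δ) = Σ_{j=0}^{m−1} f'(2πj/m + δ). -/
open Finset Real

set_option maxHeartbeats 1600000 in
/-- Let `f ∈ F_{π/2}` (odd, 2π-periodic, C¹, `f' > 0` on `(-π/2, π/2)`,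
`f' < 0` on `(π/2, 3π/2)`) be even around `π/2`, strictly concave on `[0, π]`, with
`f'` strictly concave on `[-π/2, π/2]`, and let `m = 2k + 1 ≥ 7` be odd. Then for every
`δ ∈ [0, 2π/m]`,
`2 g_m'(δ) - f'(δ + 2π/m) - 2 f'(δ) - f'(δ - 2π/m) < f'(0) - 2 f'(π/m) ≤ 0`,
where `g_m'(δ) = ∑_{j=0}^{m-1} f'(2πj/m + δ)`. -/
theorem stmt15 (f : ℝ → ℝ)
    (hodd : ∀ θ, f (-θ) = -f θ)
    (hper : ∀ θ, f (θ + 2 * π) = f θ)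
    (hC1 : ContDiff ℝ 1 f)
    (hpos : ∀ θ, -(π/2) < θ → θ < π/2 → 0 < deriv f θ)
    (hneg : ∀ θ, π/2 < θ → θ < 3*π/2 → deriv f θ < 0)
    (heven : ∀ θ, f (π - θ) = f θ)
    (hconc : StrictConcaveOn ℝ (Set.Icc 0 π) f)
    (hconc' : StrictConcaveOn ℝ (Set.Icc (-(π/2)) (π/2)) (deriv f))
    (m k : ℕ) (hmk : m = 2 * k + 1) (h7 : 7 ≤ m) :
    ∀ δ ∈ Set.Icc (0:ℝ) (2 * π / m),
      (2 * (∑ j ∈ Finset.range m, deriv f (2 * π * j / m + δ))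
          - deriv f (δ + 2 * π / m) - 2 * deriv f δ - deriv f (δ - 2 * π / m)
        < deriv f 0 - 2 * deriv f (π / m)) ∧
      deriv f 0 - 2 * deriv f (π / m) ≤ 0 := by
  have hπ := Real.pi_pos
  have hm7 : (7:ℝ) ≤ (m:ℝ) := by exact_mod_cast h7
  have hm0 : (0:ℝ) < (m:ℝ) := by linarith
  have hm' : (m:ℝ) = 2 * (k:ℝ) + 1 := by exact_mod_cast congrArg (Nat.cast : ℕ → ℝ) hmk
  have hk3 : 3 ≤ k := by omega
  have hdf : Differentiable ℝ f := hC1.differentiable one_ne_zero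
  set h := deriv f with hh
  -- h is even
  have hEven : ∀ θ : ℝ, h (-θ) = h θ := by
    intro θ
    have h1 : HasDerivAt (fun t : ℝ => f (-t)) (h (-θ) * (-1)) θ :=
      (hdf (-θ)).hasDerivAt.comp θ (hasDerivAt_neg' θ)
    rw [funext hodd] at h1
    have h2 : HasDerivAt (fun t : ℝ => -f t) (-h θ) θ := ((hdf θ).hasDerivAt).neg
    have := h1.unique h2
    linarith
  -- h (π - θ) = - h θ
  have hFlip : ∀ θ : ℝ, -h (π - θ) = h θ := by
    intro θ
    have h1 : HasDerivAt (fun t : ℝ => f (π - t)) (h (π - θ) * (-1)) θ :=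
      (hdf (π - θ)).hasDerivAt.comp θ ((hasDerivAt_id θ).const_sub π)
    rw [funext heven] at h1
    have := h1.unique (hdf θ).hasDerivAt
    linarith
  -- h is π-antiperiodic
  have hAnti : ∀ θ : ℝ, h (θ + π) = -h θ := by
    intro θ
    have h1 := hFlip (-θ)
    rw [show π - (-θ) = θ + π by ring] at h1
    have h2 := hEven θ
    linarith
  have hHalf : h (π/2) = 0 := by
    have h1 := hAnti (-(π/2))
    rw [show -(π/2) + π = π/2 by ring] at h1
    have h2 := hEven (π/2)
    linarith
  have h0pos : 0 < h 0 := hpos 0 (by linarith) (by linarith)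
  -- antitonicity of h on [0, π]
  have hmono := hconc.concaveOn.antitoneOn_deriv (fun x _ => hdf x)
  
  have hLe : ∀ a b : ℝ, 0 ≤ a → a ≤ b → b ≤ π → h b ≤ h a := fun a b ha hab hb =>
    hmono ⟨ha, le_trans hab hb⟩ ⟨le_trans ha hab, hb⟩ hab
  -- basic scalar bounds
  have ht0 : 0 < π/(m:ℝ) := div_pos hπ hm0
  have ht7 : π/(m:ℝ) ≤ π/7 := div_le_div_of_nonneg_left hπ.le (by norm_num) hm7
  have e2m : 2*π/(m:ℝ) = 2*(π/m) := by ring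
  have e3m : 3*π/(m:ℝ) = 3*(π/m) := by ring
  -- concavity facts
  have hcc := hconc'.concaveOn
  
  have mem0 : (0:ℝ) ∈ Set.Icc (-(π/2)) (π/2) := by constructor <;> linarith
  have hk0 : (2*(k:ℝ)+1) ≠ 0 := by positivity
  have capp : ∀ a b x y : ℝ, x ∈ Set.Icc (-(π/2)) (π/2) → y ∈ Set.Icc (-(π/2)) (π/2) →
      0 ≤ a → 0 ≤ b → a + b = 1 → a * h x + b * h y ≤ h (a*x + b*y) := by
    intro a b x y hx hy ha hb hab
    simpa [smul_eq_mul] using hcc.2 hx hy ha hb hab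
  have memh : (π/2) ∈ Set.Icc (-(π/2)) (π/2) := by constructor <;> linarith
  have memq : π/(m:ℝ) ∈ Set.Icc (-(π/2)) (π/2) := by constructor <;> linarith
  have hm2 : (0:ℝ) < (m:ℝ) - 2 := by linarith
  have hm2' : ((m:ℝ)-2) ≠ 0 := ne_of_gt hm2
  have fact1 : (1 - 2/(m:ℝ)) * h 0 ≤ h (π/m) := by
    have key := capp (1 - 2/(m:ℝ)) (2/(m:ℝ)) 0 (π/2) mem0 memh
      (by rw [sub_nonneg, div_le_one hm0]; linarith) (by positivity) (by ring)
    rw [hHalf, show (1 - 2/(m:ℝ)) * 0 + 2/(m:ℝ) * (π/2) = π/m by field_simp; try ring] at key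
    linarith
  have fact2 : (1 - 2/((m:ℝ)-2)) * h (π/m) ≤ h (2*π/m) := by
    have key := capp (((m:ℝ)-4)/((m:ℝ)-2)) (2/((m:ℝ)-2)) (π/m) (π/2) memq memh
      (by apply div_nonneg <;> linarith) (by positivity)
      (by field_simp; try ring)
    rw [hHalf, show ((m:ℝ)-4)/((m:ℝ)-2) * (π/m) + 2/((m:ℝ)-2) * (π/2) = 2*π/m by
        field_simp [hm2']; ring,
      show ((m:ℝ)-4)/((m:ℝ)-2) = 1 - 2/((m:ℝ)-2) by field_simp [hm2']; ring] at key
    linarith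
  have hπm_le : h (π/m) ≤ h 0 := hLe 0 (π/m) le_rfl ht0.le (by linarith)
  have hq0 : (0:ℝ) ≤ 2/((m:ℝ)-2) := by positivity
  have hq1 : 2/((m:ℝ)-2) ≤ 2/5 := by
    rw [div_le_div_iff₀ hm2 (by norm_num)]; linarith
  have s2 : 2/((m:ℝ)-2) * h (π/m) ≤ 2/((m:ℝ)-2) * h 0 :=
    mul_le_mul_of_nonneg_left hπm_le hq0
  have s3 : 2/((m:ℝ)-2) * h 0 ≤ 2/5 * h 0 := mul_le_mul_of_nonneg_right hq1 h0pos.le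
  have Key1 : 2 * h (π/m) - 2 * h (2*π/m) < h 0 := by linarith
  have Key2 : h 0 - 2 * h (π/m) ≤ 0 := by
    have c2 : 4/(m:ℝ) * h 0 ≤ 1 * h 0 :=
      mul_le_mul_of_nonneg_right (by rw [div_le_one hm0]; linarith) h0pos.le
    have ek2 : (1 - 2/(m:ℝ)) * h 0 = h 0 - (4/(m:ℝ) * h 0)/2 := by ring
    linarith
  intro δ hδ
  obtain ⟨hδ0, hδ2⟩ := hδ
  refine ⟨?_, Key2⟩
  -- the sum identity
  have hsum : (∑ j ∈ Finset.range m, h (2 * π * j / m + δ))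
      = h δ + h (δ + 2*π/m) + (∑ j ∈ Finset.range (k-1), h (δ + 2*π*((j:ℝ)+2)/m))
        - (h (δ + π/m) + ∑ j ∈ Finset.range (k-1), h (δ + π*(2*(j:ℝ)+3)/m)) := by
    have e1 : Finset.range m = Finset.range ((k+1)+k) := by rw [show m = (k+1)+k by omega]
    rw [e1, Finset.sum_range_add]
    have e2 : (∑ j ∈ Finset.range k, h (2 * π * ((k+1+j : ℕ):ℝ) / m + δ))
        = ∑ j ∈ Finset.range k, -h (δ + π*(2*(j:ℝ)+1)/m) := by
      refine Finset.sum_congr rfl fun j _ => ?_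
      rw [show 2 * π * ((k+1+j : ℕ):ℝ) / m + δ = (δ + π*(2*(j:ℝ)+1)/m) + π by
        push_cast; rw [hm']; field_simp; try ring]
      exact hAnti _
    rw [e2, Finset.sum_neg_distrib]
    have e3 : (∑ j ∈ Finset.range (k+1), h (2 * π * (j:ℝ) / m + δ))
        = h δ + h (δ + 2*π/m) + ∑ j ∈ Finset.range (k-1), h (δ + 2*π*((j:ℝ)+2)/m) := by
      rw [Finset.sum_range_succ']
      rw [show Finset.range k = Finset.range ((k-1)+1) by congr 1; omega,
        Finset.sum_range_succ']
      push_cast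
      rw [show 2 * π * (1:ℝ) / (m:ℝ) + δ = δ + 2*π/m by ring,
        show 2 * π * (0:ℝ) / (m:ℝ) + δ = δ by ring]
      simp only [show ∀ j : ℕ, 2 * π * ((j:ℝ)+1+1) / (m:ℝ) + δ = δ + 2*π*((j:ℝ)+2)/m from
        fun j => by ring]
      ring
    have e4 : (∑ j ∈ Finset.range k, h (δ + π*(2*(j:ℝ)+1)/m))
        = h (δ + π/m) + ∑ j ∈ Finset.range (k-1), h (δ + π*(2*(j:ℝ)+3)/m) := by
      rw [show Finset.range k = Finset.range ((k-1)+1) by congr 1; omega,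
        Finset.sum_range_succ']
      push_cast
      rw [show δ + π*(2*(0:ℝ)+1)/m = δ + π/m by ring]
      have : ∀ j : ℕ, δ + π*(2*((j:ℝ)+1)+3-2)/m = δ + π*(2*(j:ℝ)+3)/m := by
        intro j; ring
      simp only [show ∀ j : ℕ, δ + π*(2*((j:ℝ)+1)+1)/m = δ + π*(2*(j:ℝ)+3)/m from
        fun j => by ring]
      ring
    rw [e3, e4]
    ring
  rw [hsum]
  -- generic facts
  have hδπ : h (δ - 2*π/m) = h (2*π/m - δ) := by
    rw [show δ - 2*π/m = -(2*π/m - δ) by ring, hEven]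
  have F4 : h (δ + 2*π/m) ≤ h (δ + π/m) :=
    hLe (δ + π/m) (δ + 2*π/m) (by linarith) (by linarith) (by linarith)
  rcases le_or_gt δ (π/m) with hc | hc
  · -- case δ ≤ π/m
    have hSS : (∑ j ∈ Finset.range (k-1), h (δ + 2*π*((j:ℝ)+2)/m))
        ≤ ∑ j ∈ Finset.range (k-1), h (δ + π*(2*(j:ℝ)+3)/m) := by
      refine Finset.sum_le_sum fun j hj => ?_
      have hj' : (j:ℝ) + 2 ≤ (k:ℝ) := by
        have := Finset.mem_range.1 hj
        have : j + 2 ≤ k := by omega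
        exact_mod_cast this
      refine hLe _ _ (by positivity) ?_ ?_
      · have ed : 2*π*((j:ℝ)+2)/m - π*(2*(j:ℝ)+3)/m = π/m := by ring
        linarith
      · have ed2 : 2*π*(k:ℝ)/m - 2*π*((j:ℝ)+2)/m = 2*(((k:ℝ)-(j:ℝ)-2)*(π/m)) := by ring
        have ed3 : 0 ≤ ((k:ℝ)-(j:ℝ)-2)*(π/m) := mul_nonneg (by linarith) ht0.le
        have h2 : 2*π*(k:ℝ)/m + π/m = π := by
          rw [hm']; field_simp; try ring
        linarith
    have F1 : h (δ + 2*π/m) ≤ h (2*π/m - δ) :=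
      hLe (2*π/m - δ) (δ + 2*π/m) (by linarith) (by linarith) (by linarith)
    have F2 : h (2*π/m) ≤ h (δ + π/m) :=
      hLe (δ + π/m) (2*π/m) (by linarith) (by linarith) (by linarith)
    rw [hδπ]
    linarith
  · -- case π/m < δ
    have hSS : (∑ j ∈ Finset.range (k-2), h (δ + 2*π*((j:ℝ)+2)/m))
        ≤ ∑ j ∈ Finset.range (k-2), h (δ + π*(2*(j:ℝ)+3)/m) := by
      refine Finset.sum_le_sum fun j hj => ?_
      have hj' : (j:ℝ) + 3 ≤ (k:ℝ) := by
        have := Finset.mem_range.1 hj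
        have : j + 3 ≤ k := by omega
        exact_mod_cast this
      refine hLe _ _ (by positivity) ?_ ?_
      · have ed : 2*π*((j:ℝ)+2)/m - π*(2*(j:ℝ)+3)/m = π/m := by ring
        linarith
      · have ed2 : 2*π*((k:ℝ)-1)/m - 2*π*((j:ℝ)+2)/m = 2*(((k:ℝ)-(j:ℝ)-3)*(π/m)) := by ring
        have ed3 : 0 ≤ ((k:ℝ)-(j:ℝ)-3)*(π/m) := mul_nonneg (by linarith) ht0.le
        have h2 : 2*π*((k:ℝ)-1)/m + 2*π/m + π/m = π := by
          rw [hm']; field_simp; try ring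
        linarith
    -- peel the last terms
    have p1 : (∑ j ∈ Finset.range (k-1), h (δ + 2*π*((j:ℝ)+2)/m))
        = (∑ j ∈ Finset.range (k-2), h (δ + 2*π*((j:ℝ)+2)/m)) - h (δ - π/m) := by
      rw [show k - 1 = (k-2)+1 by omega, Finset.sum_range_succ]
      have e1 : (((k-2:ℕ)):ℝ) = (k:ℝ) - 2 := by
        have h2k : 2 ≤ k := by omega
        push_cast [h2k]; ring
      rw [e1, show δ + 2*π*((k:ℝ)-2+2)/m = (δ - π/m) + π by
        rw [hm']; field_simp; try ring, hAnti]
      ring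
    have p2 : (∑ j ∈ Finset.range (k-1), h (δ + π*(2*(j:ℝ)+3)/m))
        = (∑ j ∈ Finset.range (k-2), h (δ + π*(2*(j:ℝ)+3)/m)) - h (δ - 2*π/m) := by
      rw [show k - 1 = (k-2)+1 by omega, Finset.sum_range_succ]
      have e1 : (((k-2:ℕ)):ℝ) = (k:ℝ) - 2 := by
        have h2k : 2 ≤ k := by omega
        push_cast [h2k]; ring
      rw [e1, show δ + π*(2*((k:ℝ)-2)+3)/m = (δ - 2*π/m) + π by
        rw [hm']; field_simp; try ring, hAnti]
      ring
    have F5 : h (3*π/m) ≤ h (δ + π/m) :=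
      hLe (δ + π/m) (3*π/m) (by linarith) (by linarith) (by linarith)
    have F6 : 0 < h (3*π/m) := by
      refine hpos (3*π/m) ?_ ?_
      · have : (0:ℝ) < 3*π/m := by positivity
        linarith
      · linarith
    have F7 : h (2*π/m - δ) ≤ h 0 := hLe 0 (2*π/m - δ) le_rfl (by linarith) (by linarith)
    have F8 : h (π/m) ≤ h (δ - π/m) :=
      hLe (δ - π/m) (π/m) (by linarith) (by linarith) (by linarith)
    rw [p1, p2, hδπ]
    linarith
end
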